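/- Let G = (V, ω) be a finite connected weighted graph with vertex measure μ, let h, f : V → ℝ with f_i > 0 for all i, and let α ≥ p > 1. Set β = inf{I(φ) : φ ≥ 0, φ ≢ 0}. Then there exists φ̂ : V → ℝ with φ̂_i > 0 for all i ∈ V, ∫_V f φ̂^α dμ = 1, and (Δ_p φ̂)_i + h_i φ̂_i^{p−1} = −β · f_i φ̂_i^{α−1} for every i ∈ V; i.e. the constant λ in the p-th Yamabe equation can be taken to be −β for a normalized minimizer. -/

import Mathlib

open Filter Topology

/-- The gradient energy `∫_E |∇φ|^p dω = (1/2) ∑_{i,j} ω_ij |φ_j − φ_i|^p`. -/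
noncomputable def gradEnergy {V : Type*} [Fintype V] (ω : V → V → ℝ) (p : ℝ)
    (φ : V → ℝ) : ℝ :=
  (1 / 2) * ∑ i, ∑ j, ω i j * |φ j - φ i| ^ p

/-- The energy functional
`I(φ) = (∫_E |∇φ|^p dω − ∫_V h φ^p dμ) (∫_V f φ^α dμ)^{−p/α}`. -/
noncomputable def energy {V : Type*} [Fintype V] (μ : V → ℝ) (ω : V → V → ℝ)
    (h f : V → ℝ) (p α : ℝ) (φ : V → ℝ) : ℝ :=
  (gradEnergy ω p φ - ∑ i, μ i * (h i * φ i ^ p)) *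
    (∑ i, μ i * (f i * φ i ^ α)) ^ (-(p / α))

/-- The discrete `p`-Laplacian on a finite weighted graph:
`(Δ_p φ)_i = (1/μ_i) ∑_j ω_ij |φ_j − φ_i|^{p−2} (φ_j − φ_i)`. -/
noncomputable def pLaplacian {V : Type*} [Fintype V] (μ : V → ℝ) (ω : V → V → ℝ)
    (p : ℝ) (φ : V → ℝ) (i : V) : ℝ :=
  (1 / μ i) * ∑ j, ω i j * |φ j - φ i| ^ (p - 2) * (φ j - φ i)

lemma continuous_rpow_const' {q : ℝ} (hq : 0 ≤ q) : Continuous (fun x : ℝ => x ^ q) :=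
  continuous_iff_continuousAt.2 fun x => Real.continuousAt_rpow_const x q (Or.inr hq)

lemma abs_rpow_hasDerivAt (p : ℝ) (hp : 1 < p) (u : ℝ) :
    HasDerivAt (fun x : ℝ => |x| ^ p) (p * |u| ^ (p - 2) * u) u := by
  rcases lt_trichotomy u 0 with hu | hu | hu
  · have h1 : HasDerivAt (fun x : ℝ => (-x) ^ p) (p * (-u) ^ (p - 1) * (-1)) u := by
      exact (Real.hasDerivAt_rpow_const (p := p) (Or.inr hp.le)).comp u (hasDerivAt_neg u)
    have h2 : (fun x : ℝ => (-x) ^ p) =ᶠ[𝓝 u] fun x => |x| ^ p := by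
      filter_upwards [Iio_mem_nhds hu] with x hx
      rw [abs_of_neg hx]
    have := h1.congr_of_eventuallyEq h2.symm
    refine this.congr_deriv ?_
    rw [abs_of_neg hu]
    have : (-u) ^ (p - 1) = (-u) ^ (p - 2) * (-u) := by
      rw [← Real.rpow_add_one (by linarith : (-u) ≠ 0)]
      ring_nf
    rw [this]; ring
  · subst hu
    rw [hasDerivAt_iff_tendsto_slope]
    have hz : p * |(0:ℝ)| ^ (p - 2) * 0 = 0 := by ring
    rw [hz]
    apply squeeze_zero_norm' (a := fun x : ℝ => |x| ^ (p - 1))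
    · filter_upwards [self_mem_nhdsWithin] with x (hx : x ≠ 0)
      have : slope (fun x : ℝ => |x| ^ p) 0 x = |x| ^ p / x := by
        simp [slope_def_field, Real.zero_rpow (by linarith : p ≠ 0), div_eq_inv_mul]
      rw [this]
      rw [Real.norm_eq_abs, abs_div, abs_of_nonneg (Real.rpow_nonneg (abs_nonneg x) p)]
      rw [div_le_iff₀ (abs_pos.2 hx)]
      rw [← Real.rpow_add_one (by simpa using hx) (p-1)]
      norm_num
    · have : ContinuousAt (fun x : ℝ => |x| ^ (p-1)) 0 := by
        exact ((Real.continuousAt_rpow_const _ _ (Or.inr (by linarith))).comp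
          continuous_abs.continuousAt)
      have h0 : |(0:ℝ)| ^ (p-1) = 0 := by
        simp [Real.zero_rpow (by linarith : p - 1 ≠ 0)]
      have := this.tendsto
      rw [h0] at this
      exact this.mono_left nhdsWithin_le_nhds
  · have h1 : HasDerivAt (fun x : ℝ => x ^ p) (p * u ^ (p - 1)) u :=
      Real.hasDerivAt_rpow_const (Or.inr hp.le)
    have h2 : (fun x : ℝ => x ^ p) =ᶠ[𝓝 u] fun x => |x| ^ p := by
      filter_upwards [Ioi_mem_nhds hu] with x hx
      rw [abs_of_pos hx]
    have := h1.congr_of_eventuallyEq h2.symm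
    refine this.congr_deriv ?_
    rw [abs_of_pos hu]
    rw [show p - 1 = p - 2 + 1 by ring, Real.rpow_add_one (ne_of_gt hu)]
    ring

lemma hasDerivAt_update_wsum {V : Type*} [Fintype V] [DecidableEq V] (a b : V → ℝ)
    (q : ℝ) (hq : 1 ≤ q) (φ0 : V → ℝ) (i : V) :
    HasDerivAt (fun t : ℝ => ∑ j, a j * (b j * (Function.update φ0 i (φ0 i + t) j) ^ q))
      (a i * (b i * (q * φ0 i ^ (q - 1)))) 0 := by
  have hsum := HasDerivAt.fun_sum (u := Finset.univ)
    (A := fun j (t : ℝ) => a j * (b j * (Function.update φ0 i (φ0 i + t) j) ^ q))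
    (A' := fun j => if j = i then a i * (b i * (q * φ0 i ^ (q - 1))) else 0)
    (x := 0) ?_
  · simpa using hsum
  · intro j _
    by_cases hj : j = i
    · subst hj
      simp only [Function.update_self, if_pos rfl]
      have h1 : HasDerivAt (fun t : ℝ => φ0 j + t) 1 0 := by
        simpa using (hasDerivAt_id (0:ℝ)).const_add (φ0 j)
      have h2 : HasDerivAt (fun x : ℝ => x ^ q) (q * (φ0 j + 0) ^ (q - 1)) (φ0 j + 0) :=
        Real.hasDerivAt_rpow_const (Or.inr hq)
      have h3 := h2.comp 0 h1
      simp only [add_zero, Function.comp_def, mul_one] at h3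
      have h4 := (h3.const_mul (b j)).const_mul (a j)
      exact h4.congr_deriv (by simp)
    · have heq : (fun t : ℝ => a j * (b j * (Function.update φ0 i (φ0 i + t) j) ^ q))
          = fun _ => a j * (b j * (φ0 j) ^ q) := by
        funext t; rw [Function.update_of_ne hj]
      show HasDerivAt (fun t : ℝ => a j * (b j * (Function.update φ0 i (φ0 i + t) j) ^ q))
        (if j = i then a i * (b i * (q * φ0 i ^ (q - 1))) else 0) 0
      rw [heq, if_neg hj]
      exact hasDerivAt_const _ _

lemma hasDerivAt_update_gradEnergy {V : Type*} [Fintype V] [DecidableEq V] (ω : V → V → ℝ)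
    (hωsym : ∀ i j, ω i j = ω j i) (p : ℝ) (hp : 1 < p) (φ0 : V → ℝ) (i : V) :
    HasDerivAt (fun t : ℝ => gradEnergy ω p (Function.update φ0 i (φ0 i + t)))
      (-(p * ∑ j, ω i j * |φ0 j - φ0 i| ^ (p - 2) * (φ0 j - φ0 i))) 0 := by
  set e : V → ℝ := fun j => if j = i then 1 else 0 with he
  set T : V → V → ℝ := fun a b => p * |φ0 b - φ0 a| ^ (p - 2) * (φ0 b - φ0 a) with hT
  have hu : ∀ (j : V) (t : ℝ), Function.update φ0 i (φ0 i + t) j = φ0 j + e j * t := by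
    intro j t
    by_cases hj : j = i
    · subst hj; simp [he]
    · simp [Function.update_of_ne hj, he, hj]
  have hpair : ∀ a b : V, HasDerivAt
      (fun t : ℝ => ω a b * |Function.update φ0 i (φ0 i + t) b -
        Function.update φ0 i (φ0 i + t) a| ^ p)
      (ω a b * (T a b * (e b - e a))) 0 := by
    intro a b
    have hfun : (fun t : ℝ => Function.update φ0 i (φ0 i + t) b -
        Function.update φ0 i (φ0 i + t) a)
        = fun t => (φ0 b - φ0 a) + (e b - e a) * t := by
      funext t; rw [hu, hu]; ring
    have h1' : HasDerivAt (fun t : ℝ => Function.update φ0 i (φ0 i + t) b -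
        Function.update φ0 i (φ0 i + t) a) (e b - e a) 0 := by
      rw [hfun]
      simpa using ((hasDerivAt_id (0:ℝ)).const_mul (e b - e a)).const_add (φ0 b - φ0 a)
    have h2' : HasDerivAt (fun x : ℝ => |x| ^ p) (p * |φ0 b - φ0 a| ^ (p-2) * (φ0 b - φ0 a))
        ((fun t : ℝ => Function.update φ0 i (φ0 i + t) b -
          Function.update φ0 i (φ0 i + t) a) 0) := by
      have h2 := abs_rpow_hasDerivAt p hp (φ0 b - φ0 a)
      have : (fun t : ℝ => Function.update φ0 i (φ0 i + t) b -
          Function.update φ0 i (φ0 i + t) a) 0 = φ0 b - φ0 a := by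
        rw [hfun]; ring
      rw [this]; exact h2
    have h3 := h2'.comp 0 h1'
    simp only [Function.comp_def] at h3
    have h4 := h3.const_mul (ω a b)
    convert h4 using 1 <;> simp only [hT] <;> try ring
  have hsum : HasDerivAt (fun t : ℝ => gradEnergy ω p (Function.update φ0 i (φ0 i + t)))
      ((1/2) * ∑ a, ∑ b, ω a b * (T a b * (e b - e a))) 0 := by
    have := (HasDerivAt.fun_sum (u := Finset.univ)
      (A := fun a (t : ℝ) => ∑ b, ω a b * |Function.update φ0 i (φ0 i + t) b -
        Function.update φ0 i (φ0 i + t) a| ^ p)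
      (A' := fun a => ∑ b, ω a b * (T a b * (e b - e a)))
      (x := 0) (fun a _ => HasDerivAt.fun_sum (fun b _ => hpair a b))).const_mul (1/2 : ℝ)
    simpa [gradEnergy] using this
  convert hsum using 1
  have hasym : ∀ a, ω a i * T a i = -(ω i a * T i a) := by
    intro a
    rw [hωsym a i, hT]
    simp only
    rw [abs_sub_comm]
    ring
  have hsplit : ∀ a, ∑ b, ω a b * (T a b * (e b - e a))
      = (∑ b, ω a b * T a b * e b) - (∑ b, ω a b * T a b) * e a := by
    intro a
    rw [Finset.sum_mul, ← Finset.sum_sub_distrib]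
    exact Finset.sum_congr rfl fun b _ => by ring
  rw [Finset.sum_congr rfl (fun a _ => hsplit a), Finset.sum_sub_distrib]
  have h5 : ∀ a : V, (∑ b, ω a b * T a b * e b) = ω a i * T a i := by
    intro a
    rw [show (∑ b, ω a b * T a b * e b) = ∑ b, if b = i then ω a b * T a b else 0 from
      Finset.sum_congr rfl fun b _ => by by_cases hb : b = i <;> simp [he, hb]]
    simp [Finset.sum_ite_eq']
  have h6 : (∑ a : V, (∑ b, ω a b * T a b) * e a) = ∑ b, ω i b * T i b := by
    rw [show (∑ a : V, (∑ b, ω a b * T a b) * e a)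
        = ∑ a : V, if a = i then (∑ b, ω a b * T a b) else 0 from
      Finset.sum_congr rfl fun a _ => by by_cases ha : a = i <;> simp [he, ha]]
    simp [Finset.sum_ite_eq']
  rw [Finset.sum_congr rfl (fun a _ => h5 a), h6,
    Finset.sum_congr rfl (fun a _ => hasym a), Finset.sum_neg_distrib]
  rw [Finset.mul_sum]
  rw [Finset.sum_congr rfl (fun j (_ : j ∈ Finset.univ) =>
    (show ω i j * T i j = p * (ω i j * |φ0 j - φ0 i| ^ (p-2) * (φ0 j - φ0 i)) by
      rw [hT]; ring))]
  rw [← Finset.mul_sum]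
  ring

lemma nonneg_deriv_of_right_min {g : ℝ → ℝ} {c : ℝ} (hg : HasDerivAt g c 0)
    (hmin : ∀ t > 0, g 0 ≤ g t) : 0 ≤ c := by
  by_contra hc
  push_neg at hc
  have h1 := hasDerivAt_iff_tendsto_slope.1 hg
  have h2 : ∀ᶠ t in 𝓝[≠] (0:ℝ), slope g 0 t < 0 := h1.eventually_lt_const hc
  have h3 : ∀ᶠ t in 𝓝[>] (0:ℝ), slope g 0 t < 0 :=
    h2.filter_mono (nhdsWithin_mono 0 (fun x hx => ne_of_gt hx))
  obtain ⟨t, hts, ht⟩ := (h3.and self_mem_nhdsWithin).exists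
  have ht0 : (0:ℝ) < t := ht
  rw [slope_def_field] at hts
  have hlt : (g t - g 0) / (t - 0) < 0 := hts
  rw [sub_zero] at hlt
  have := hmin t ht0
  rcases div_neg_iff.1 hlt with ⟨h4, h5⟩ | ⟨h4, h5⟩
  · linarith
  · linarith


/-- On a finite connected graph there is a normalized, everywhere positive
minimizer `φ̂` of the energy functional, with `∫_V f φ̂^α dμ = 1`, solving the
`p`-th Yamabe equation `Δ_p φ̂ + h φ̂^{p−1} = −β f φ̂^{α−1}` where
`β = inf {I(φ) : φ ≥ 0, φ ≢ 0}`. -/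
theorem yamabe_solution_with_lambda_neg_beta
    {V : Type*} [Fintype V] [Nonempty V]
    (μ : V → ℝ) (hμ : ∀ i, 0 < μ i)
    (ω : V → V → ℝ) (hωsym : ∀ i j, ω i j = ω j i)
    (hωnonneg : ∀ i j, 0 ≤ ω i j) (hωloop : ∀ i, ω i i = 0)
    (hconn : ∀ i j : V, Relation.ReflTransGen (fun a b => 0 < ω a b) i j)
    (h f : V → ℝ) (hf : ∀ i, 0 < f i)
    (p α : ℝ) (hp : 1 < p) (hpα : p ≤ α)
    (β : ℝ)
    (hβ : β = sInf {y : ℝ | ∃ φ : V → ℝ, (∀ i, 0 ≤ φ i) ∧ φ ≠ 0 ∧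
      energy μ ω h f p α φ = y}) :
    ∃ φhat : V → ℝ, (∀ i, 0 < φhat i) ∧
      (∑ i, μ i * (f i * φhat i ^ α) = 1) ∧
      ∀ i, pLaplacian μ ω p φhat i + h i * φhat i ^ (p - 1) =
        -β * f i * φhat i ^ (α - 1) := by
  classical
  have hα : 1 < α := lt_of_lt_of_le hp hpα
  have hα0 : (0:ℝ) < α := by linarith
  have hp0 : (0:ℝ) < p := by linarith
  set D : (V → ℝ) → ℝ := fun φ => ∑ i, μ i * (f i * φ i ^ α) with hDdef
  set N : (V → ℝ) → ℝ := fun φ => gradEnergy ω p φ - ∑ i, μ i * (h i * φ i ^ p) with hNdef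
  have henergy : ∀ φ : V → ℝ, energy μ ω h f p α φ = N φ * (D φ) ^ (-(p / α)) :=
    fun φ => rfl
  set S : Set (V → ℝ) := {φ | (∀ j, 0 ≤ φ j) ∧ D φ = 1} with hSdef
  have hDcont : Continuous D := by
    rw [hDdef]
    exact continuous_finset_sum _ fun j _ => continuous_const.mul (continuous_const.mul
      ((continuous_rpow_const' hα0.le).comp (continuous_apply j)))
  have hNcont : Continuous N := by
    rw [hNdef]
    refine Continuous.sub ?_ ?_
    · unfold gradEnergy
      exact continuous_const.mul (continuous_finset_sum _ fun a _ =>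
        continuous_finset_sum _ fun b _ => continuous_const.mul
          ((continuous_rpow_const' hp0.le).comp
            (continuous_abs.comp ((continuous_apply b).sub (continuous_apply a)))))
    · exact continuous_finset_sum _ fun j _ => continuous_const.mul (continuous_const.mul
        ((continuous_rpow_const' hp0.le).comp (continuous_apply j)))
  -- S is compact and nonempty
  have htermnn : ∀ (φ : V → ℝ), (∀ j, 0 ≤ φ j) → ∀ k : V, 0 ≤ μ k * (f k * φ k ^ α) :=
    fun φ hφ k => mul_nonneg (hμ k).le (mul_nonneg (hf k).le
      (Real.rpow_nonneg (hφ k) α))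
  have hScomp : IsCompact S := by
    have hclosed : IsClosed S := by
      have : S = (⋂ j, {φ : V → ℝ | 0 ≤ φ j}) ∩ D ⁻¹' {1} := by
        ext φ
        simp only [hSdef, Set.mem_setOf_eq, Set.mem_inter_iff, Set.mem_iInter,
          Set.mem_preimage, Set.mem_singleton_iff]
      rw [this]
      exact ((isClosed_iInter fun j => isClosed_le continuous_const
        (continuous_apply j))).inter (isClosed_singleton.preimage hDcont)
    have hbox : IsCompact (Set.univ.pi fun j : V => Set.Icc (0:ℝ)
        ((1 / (μ j * f j)) ^ α⁻¹)) := isCompact_univ_pi fun j => isCompact_Icc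
    refine hbox.of_isClosed_subset hclosed ?_
    intro φ hφ
    obtain ⟨hφnn, hφD⟩ := hφ
    rw [Set.mem_univ_pi]
    intro j
    refine ⟨hφnn j, ?_⟩
    have h1 : μ j * (f j * φ j ^ α) ≤ 1 := by
      rw [← hφD]
      exact Finset.single_le_sum (fun k _ => htermnn φ hφnn k) (Finset.mem_univ j)
    have hmf : 0 < μ j * f j := mul_pos (hμ j) (hf j)
    have h2 : φ j ^ α ≤ 1 / (μ j * f j) := by
      rw [le_div_iff₀ hmf]
      calc φ j ^ α * (μ j * f j) = μ j * (f j * φ j ^ α) := by ring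
        _ ≤ 1 := h1
    calc φ j = (φ j ^ α) ^ α⁻¹ := by
          rw [← Real.rpow_mul (hφnn j), mul_inv_cancel₀ hα0.ne', Real.rpow_one]
      _ ≤ (1 / (μ j * f j)) ^ α⁻¹ :=
          Real.rpow_le_rpow (Real.rpow_nonneg (hφnn j) α) h2 (inv_nonneg.2 hα0.le)
  have hSne : S.Nonempty := by
    set Tot : ℝ := ∑ j, μ j * f j with hTot
    have hTotpos : 0 < Tot := Finset.sum_pos (fun j _ => mul_pos (hμ j) (hf j))
      Finset.univ_nonempty
    set c : ℝ := Tot ^ (-α⁻¹) with hc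
    have hcpos : 0 < c := Real.rpow_pos_of_pos hTotpos _
    refine ⟨fun _ => c, fun j => hcpos.le, ?_⟩
    have hcα : c ^ α = Tot⁻¹ := by
      rw [hc, ← Real.rpow_mul hTotpos.le, neg_mul, inv_mul_cancel₀ hα0.ne',
        Real.rpow_neg_one]
    show (∑ j, μ j * (f j * c ^ α)) = 1
    rw [show (∑ j, μ j * (f j * c ^ α)) = c ^ α * Tot by
      rw [hTot, Finset.mul_sum]; exact Finset.sum_congr rfl fun j _ => by ring]
    rw [hcα, inv_mul_cancel₀ hTotpos.ne']
  -- the admissible value set equals the image of N on S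
  set A : Set ℝ := {y : ℝ | ∃ φ : V → ℝ, (∀ i, 0 ≤ φ i) ∧ φ ≠ 0 ∧
      energy μ ω h f p α φ = y} with hAdef
  have hDzero : D 0 = 0 := by
    show (∑ i, μ i * (f i * (0:V → ℝ) i ^ α)) = 0
    simp [Real.zero_rpow hα0.ne']
  have hAeq : A = N '' S := by
    ext y
    constructor
    · rintro ⟨φ, hφnn, hφne, rfl⟩
      -- rescale φ to the sphere
      have hk : ∃ k, φ k ≠ 0 := by
        by_contra hk
        push_neg at hk
        exact hφne (funext fun k => hk k)
      obtain ⟨k, hk⟩ := hk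
      have hφk : 0 < φ k := lt_of_le_of_ne (hφnn k) (Ne.symm hk)
      have hDpos : 0 < D φ := by
        refine Finset.sum_pos' (fun j _ => htermnn φ hφnn j) ⟨k, Finset.mem_univ k, ?_⟩
        exact mul_pos (hμ k) (mul_pos (hf k) (Real.rpow_pos_of_pos hφk α))
      set t : ℝ := (D φ) ^ (-α⁻¹) with ht
      have htpos : 0 < t := Real.rpow_pos_of_pos hDpos _
      set ψ : V → ℝ := fun j => t * φ j with hψ
      have hψnn : ∀ j, 0 ≤ ψ j := fun j => mul_nonneg htpos.le (hφnn j)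
      have htα : t ^ α = (D φ)⁻¹ := by
        rw [ht, ← Real.rpow_mul hDpos.le, neg_mul, inv_mul_cancel₀ hα0.ne',
          Real.rpow_neg_one]
      have hψD : D ψ = 1 := by
        show (∑ j, μ j * (f j * (t * φ j) ^ α)) = 1
        rw [show (∑ j, μ j * (f j * (t * φ j) ^ α))
            = t ^ α * ∑ j, μ j * (f j * φ j ^ α) by
          rw [Finset.mul_sum]
          refine Finset.sum_congr rfl fun j _ => ?_
          rw [Real.mul_rpow htpos.le (hφnn j)]; ring]
        rw [htα]
        exact inv_mul_cancel₀ hDpos.ne'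
      refine ⟨ψ, ⟨hψnn, hψD⟩, ?_⟩
      -- N ψ = energy φ
      have hgrad : gradEnergy ω p ψ = t ^ p * gradEnergy ω p φ := by
        unfold gradEnergy
        have hterm : ∀ a b : V, ω a b * |ψ b - ψ a| ^ p
            = t ^ p * (ω a b * |φ b - φ a| ^ p) := by
          intro a b
          rw [show ψ b - ψ a = t * (φ b - φ a) by rw [hψ]; ring, abs_mul,
            abs_of_pos htpos, Real.mul_rpow htpos.le (abs_nonneg _)]
          ring
        simp only [hterm, ← Finset.mul_sum]
        ring
      have hsum : (∑ j, μ j * (h j * ψ j ^ p)) = t ^ p * ∑ j, μ j * (h j * φ j ^ p) := by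
        rw [Finset.mul_sum]
        refine Finset.sum_congr rfl fun j _ => ?_
        rw [show ψ j = t * φ j from rfl, Real.mul_rpow htpos.le (hφnn j)]
        ring
      have hNψ : N ψ = t ^ p * N φ := by
        rw [hNdef]
        simp only
        rw [hgrad, hsum]
        ring
      have htp : t ^ p = (D φ) ^ (-(p/α)) := by
        rw [ht, ← Real.rpow_mul hDpos.le]
        congr 1
        field_simp
      rw [hNψ, htp, henergy]
      ring
    · rintro ⟨φ, ⟨hφnn, hφD⟩, rfl⟩
      refine ⟨φ, hφnn, ?_, ?_⟩
      · intro hzero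
        rw [hzero] at hφD
        rw [hDzero] at hφD
        norm_num at hφD
      · rw [henergy, hφD, Real.one_rpow, mul_one]
  have hAcomp : IsCompact (N '' S) := hScomp.image hNcont
  have hAne : (N '' S).Nonempty := hSne.image N
  have hβmem : β ∈ N '' S := by
    rw [hβ, hAeq]
    exact hAcomp.sInf_mem hAne
  obtain ⟨φ0, hφ0S, hφ0N⟩ := hβmem
  obtain ⟨hφ0nonneg, hφ0D⟩ := hφ0S
  have hlb : ∀ ψ : V → ℝ, (∀ j, 0 ≤ ψ j) → ψ ≠ 0 → β ≤ energy μ ω h f p α ψ := by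
    intro ψ h1 h2
    rw [hβ]
    exact csInf_le (hAeq ▸ hAcomp.bddBelow) ⟨ψ, h1, h2, rfl⟩
  -- the derivative of the energy along coordinate variations
  have hderiv : ∀ i : V, HasDerivAt
      (fun t : ℝ => energy μ ω h f p α (Function.update φ0 i (φ0 i + t)))
      (-(p * ((∑ j, ω i j * |φ0 j - φ0 i| ^ (p - 2) * (φ0 j - φ0 i))
        + μ i * (h i * φ0 i ^ (p - 1)) + β * (μ i * (f i * φ0 i ^ (α - 1)))))) 0 := by
    intro i
    have hupd0 : Function.update φ0 i (φ0 i + 0) = φ0 := by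
      rw [add_zero, Function.update_eq_self]
    have hG := hasDerivAt_update_gradEnergy ω hωsym p hp φ0 i
    have hH := hasDerivAt_update_wsum μ h p hp.le φ0 i
    have hF := hasDerivAt_update_wsum μ f α hα.le φ0 i
    have hNder : HasDerivAt (fun t : ℝ => N (Function.update φ0 i (φ0 i + t)))
        (-(p * ∑ j, ω i j * |φ0 j - φ0 i| ^ (p - 2) * (φ0 j - φ0 i))
          - μ i * (h i * (p * φ0 i ^ (p - 1)))) 0 := by
      simp only [hNdef]
      exact hG.sub hH
    have hDder : HasDerivAt (fun t : ℝ => D (Function.update φ0 i (φ0 i + t)))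
        (μ i * (f i * (α * φ0 i ^ (α - 1)))) 0 := by
      simp only [hDdef]
      exact hF
    have hone : D (Function.update φ0 i (φ0 i + 0)) = 1 := by rw [hupd0, hφ0D]
    have hrpow : HasDerivAt (fun y : ℝ => y ^ (-(p/α)))
        (-(p/α) * D (Function.update φ0 i (φ0 i + 0)) ^ (-(p/α) - 1))
        ((fun t : ℝ => D (Function.update φ0 i (φ0 i + t))) 0) :=
      Real.hasDerivAt_rpow_const (Or.inl (by simp only [hone]; norm_num))
    have hRder := hrpow.comp 0 hDder
    simp only [Function.comp_def, hone, Real.one_rpow] at hRder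
    have hmul := hNder.mul hRder
    simp only [hupd0, hφ0D, hφ0N, Real.one_rpow, mul_one] at hmul
    have hE : (fun t : ℝ => energy μ ω h f p α (Function.update φ0 i (φ0 i + t)))
        = fun t : ℝ => N (Function.update φ0 i (φ0 i + t)) *
            (D (Function.update φ0 i (φ0 i + t))) ^ (-(p/α)) := by
      funext t; rw [henergy]
    rw [hE]
    refine hmul.congr_deriv ?_
    have hpdiv : p / α * α = p := div_mul_cancel₀ p hα0.ne'
    linear_combination (-β * (μ i * (f i * φ0 i ^ (α - 1)))) * hpdiv
  have hval0 : ∀ i : V, energy μ ω h f p α (Function.update φ0 i (φ0 i + 0)) = β := by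
    intro i
    rw [add_zero, Function.update_eq_self, henergy, hφ0D, hφ0N, Real.one_rpow, mul_one]
  -- positivity of the minimizer
  have hzero_prop : ∀ i, φ0 i = 0 → ∀ j, 0 < ω i j → φ0 j = 0 := by
    intro i hi j hij
    have hd := hderiv i
    set Si : ℝ := ∑ j, ω i j * |φ0 j - φ0 i| ^ (p - 2) * (φ0 j - φ0 i) with hSidef
    have htermnn' : ∀ k : V, 0 ≤ ω i k * |φ0 k - φ0 i| ^ (p - 2) * (φ0 k - φ0 i) := by
      intro k
      have h1 : 0 ≤ φ0 k - φ0 i := by rw [hi, sub_zero]; exact hφ0nonneg k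
      exact mul_nonneg (mul_nonneg (hωnonneg i k)
        (Real.rpow_nonneg (abs_nonneg _) _)) h1
    have hSinn : 0 ≤ Si := Finset.sum_nonneg fun k _ => htermnn' k
    have hh0 : φ0 i ^ (p - 1) = 0 := by
      rw [hi, Real.zero_rpow (by linarith : p - 1 ≠ 0)]
    have hf0 : φ0 i ^ (α - 1) = 0 := by
      rw [hi, Real.zero_rpow (by linarith : α - 1 ≠ 0)]
    have hmin : ∀ t > 0, (fun t : ℝ => energy μ ω h f p α
        (Function.update φ0 i (φ0 i + t))) 0 ≤ (fun t : ℝ => energy μ ω h f p α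
        (Function.update φ0 i (φ0 i + t))) t := by
      intro t ht
      simp only
      rw [hval0 i]
      apply hlb
      · intro k
        by_cases hk : k = i
        · subst hk
          rw [Function.update_self, hi, zero_add]
          exact ht.le
        · rw [Function.update_of_ne hk]
          exact hφ0nonneg k
      · intro hzero
        have := congrFun hzero i
        rw [Function.update_self, hi, zero_add] at this
        rw [this] at ht
        exact lt_irrefl 0 ht
    have hc := nonneg_deriv_of_right_min hd hmin
    rw [hh0, hf0] at hc
    have hSi0 : Si = 0 := by
      have : Si ≤ 0 := by nlinarith
      linarith
    have hterm0 := (Finset.sum_eq_zero_iff_of_nonneg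
      (fun k (_ : k ∈ Finset.univ) => htermnn' k)).1 hSi0 j (Finset.mem_univ j)
    by_contra hne
    have hjpos : 0 < φ0 j := lt_of_le_of_ne (hφ0nonneg j) (Ne.symm hne)
    have hsub : φ0 j - φ0 i = φ0 j := by rw [hi, sub_zero]
    rw [hsub, abs_of_pos hjpos] at hterm0
    have : 0 < ω i j * φ0 j ^ (p - 2) * φ0 j :=
      mul_pos (mul_pos hij (Real.rpow_pos_of_pos hjpos _)) hjpos
    rw [hterm0] at this
    exact lt_irrefl 0 this
  have hpos : ∀ i, 0 < φ0 i := by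
    by_contra hcon
    push_neg at hcon
    obtain ⟨i, hi⟩ := hcon
    have hi0 : φ0 i = 0 := le_antisymm hi (hφ0nonneg i)
    have hall : ∀ j, φ0 j = 0 := by
      intro j
      have hpath := hconn i j
      induction hpath with
      | refl => exact hi0
      | tail h1 h2 ih => exact hzero_prop _ ih _ h2
    have hzero : φ0 = 0 := funext hall
    rw [hzero, hDzero] at hφ0D
    norm_num at hφ0D
  -- the Euler–Lagrange equation
  refine ⟨φ0, hpos, hφ0D, fun i => ?_⟩
  have hloc : IsLocalMin (fun t : ℝ => energy μ ω h f p α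
      (Function.update φ0 i (φ0 i + t))) 0 := by
    have hev : ∀ᶠ t in 𝓝 (0:ℝ), |t| < φ0 i := by
      have := eventually_abs_sub_lt (0:ℝ) (hpos i)
      simpa using this
    refine hev.mono fun t ht => ?_
    show energy μ ω h f p α (Function.update φ0 i (φ0 i + 0)) ≤ _
    rw [hval0 i]
    apply hlb
    · intro k
      by_cases hk : k = i
      · subst hk
        rw [Function.update_self]
        have := (abs_lt.1 ht).1
        linarith
      · rw [Function.update_of_ne hk]
        exact hφ0nonneg k
    · intro hzero
      have h1 := congrFun hzero i
      rw [Function.update_self] at h1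
      have h2 := (abs_lt.1 ht).1
      have h3 : (0:ℝ) = 0 := rfl
      have : φ0 i + t = 0 := h1
      linarith
  have hc0 := hloc.hasDerivAt_eq_zero (hderiv i)
  have hE0 : (∑ j, ω i j * |φ0 j - φ0 i| ^ (p - 2) * (φ0 j - φ0 i))
      + μ i * (h i * φ0 i ^ (p - 1)) + β * (μ i * (f i * φ0 i ^ (α - 1))) = 0 := by
    have h1 := neg_eq_zero.1 hc0
    rcases mul_eq_zero.1 h1 with h2 | h2
    · exact absurd h2 hp0.ne'
    · exact h2
  have hSi : (∑ j, ω i j * |φ0 j - φ0 i| ^ (p - 2) * (φ0 j - φ0 i))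
      = -(μ i * (h i * φ0 i ^ (p - 1))) - β * (μ i * (f i * φ0 i ^ (α - 1))) := by
    linarith
  unfold pLaplacian
  rw [hSi]
  field_simp [(hμ i).ne']
  ring
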